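/- Let G be a countable group acting by homeomorphisms on a nonempty compact metrizable topological space X (with its Borel σ-algebra), and let μ be a probability measure on G. Then there exists a μ-stationary Borel probability measure ν on X. -/

import Mathlib

open MeasureTheory

open Filter ENNReal NNReal Topology TopologicalSpace in
/-- Existence of a stationary measure: if a countable group `G` equipped with a probability
measure `μ` acts by homeomorphisms on a nonempty compact metrizable space `X`, then there
exists a `μ`-stationary Borel probability measure on `X`. -/
theorem exists_stationary_measure
    {G X : Type*} [Group G] [Countable G] [MeasurableSpace G] [DiscreteMeasurableSpace G]
    [TopologicalSpace X] [CompactSpace X] [TopologicalSpace.MetrizableSpace X] [Nonempty X]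
    [MeasurableSpace X] [BorelSpace X] [MulAction G X]
    (hcont : ∀ g : G, Continuous fun x : X => g • x)
    (μ : Measure G) [IsProbabilityMeasure μ] :
    ∃ ν : Measure X, IsProbabilityMeasure ν ∧
      ∀ A : Set X, MeasurableSet A →
        ν A = ∑' g : G, μ {g} * ν ((fun x => g • x) ⁻¹' A) := by
  classical
  letI : MetricSpace X := TopologicalSpace.metrizableSpaceMetric X
  set φ : G → X → X := fun g x => g • x with hφdef
  have hφm : ∀ g, Measurable (φ g) := fun g => (hcont g).measurable
  -- total mass of μ as a sum over singletons
  have hμtot : ∑' g : G, μ {g} = 1 := by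
    rw [← measure_iUnion (fun i j hij => by simpa using hij)
      (fun g => measurableSet_singleton g)]
    simp [Set.iUnion_of_singleton]
  -- the Markov operator
  set T : Measure X → Measure X :=
    fun ρ => Measure.sum (fun g : G => μ {g} • ρ.map (φ g)) with hTdef
  have hTapp : ∀ ρ : Measure X, ∀ A : Set X, MeasurableSet A →
      T ρ A = ∑' g : G, μ {g} * ρ (φ g ⁻¹' A) := by
    intro ρ A hA
    rw [hTdef, Measure.sum_apply _ hA]
    exact tsum_congr fun g => by
      rw [Measure.smul_apply, Measure.map_apply (hφm g) hA, smul_eq_mul]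
  have hTprob : ∀ ρ : Measure X, IsProbabilityMeasure ρ → IsProbabilityMeasure (T ρ) := by
    intro ρ hρ
    constructor
    rw [hTapp ρ _ MeasurableSet.univ]
    simp only [Set.preimage_univ, hρ.measure_univ, mul_one]
    exact hμtot
  obtain ⟨x0⟩ := ‹Nonempty X›
  -- iterates of the Dirac mass
  set ρs : ℕ → Measure X := fun n => T^[n] (Measure.dirac x0) with hρsdef
  have hρprob : ∀ n, IsProbabilityMeasure (ρs n) := by
    intro n
    induction n with
    | zero => simpa [hρsdef] using (inferInstance : IsProbabilityMeasure (Measure.dirac x0))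
    | succ n ih =>
        have : ρs (n+1) = T (ρs n) := by
          rw [hρsdef]; exact Function.iterate_succ_apply' T n (Measure.dirac x0)
        rw [this]; exact hTprob _ ih
  have hρsucc : ∀ n, ∀ A : Set X, MeasurableSet A →
      ρs (n+1) A = ∑' g : G, μ {g} * ρs n (φ g ⁻¹' A) := by
    intro n A hA
    have : ρs (n+1) = T (ρs n) := by
      rw [hρsdef]; exact Function.iterate_succ_apply' T n (Measure.dirac x0)
    rw [this]; exact hTapp _ _ hA
  have hρle1 : ∀ n (A : Set X), ρs n A ≤ 1 := fun n A => by
    haveI := hρprob n; exact prob_le_one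
  -- Cesàro averages
  set c : ℕ → ℝ≥0∞ := fun n => (((n+1 : ℕ) : ℝ≥0∞))⁻¹ with hcdef
  have hcn0 : ∀ n, ((n+1 : ℕ) : ℝ≥0∞) ≠ 0 := fun n => Nat.cast_ne_zero.2 n.succ_ne_zero
  have hcnt : ∀ n, ((n+1 : ℕ) : ℝ≥0∞) ≠ ⊤ := fun n => ENNReal.natCast_ne_top _
  set ν : ℕ → Measure X := fun n => c n • ∑ k ∈ Finset.range (n+1), ρs k with hνdef
  have hνapp : ∀ n (A : Set X), ν n A = c n * ∑ k ∈ Finset.range (n+1), ρs k A := by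
    intro n A
    rw [hνdef]
    simp only [Measure.smul_apply, smul_eq_mul, Measure.finset_sum_apply]
  have hνprob : ∀ n, IsProbabilityMeasure (ν n) := by
    intro n
    constructor
    rw [hνapp]
    rw [Finset.sum_congr rfl fun k _ => (hρprob k).measure_univ]
    simp only [Finset.sum_const, Finset.card_range, nsmul_eq_mul, mul_one]
    exact ENNReal.inv_mul_cancel (hcn0 n) (hcnt n)
  have hνle1 : ∀ n (A : Set X), ν n A ≤ 1 := fun n A => by
    haveI := hνprob n; exact prob_le_one
  -- approximate stationarity of the Cesàro averages
  have hkey : ∀ n, ∀ A : Set X, MeasurableSet A →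
      (∑' g : G, μ {g} * ν n (φ g ⁻¹' A)) = c n * ∑ k ∈ Finset.range (n+1), ρs (k+1) A := by
    intro n A hA
    have step1 : ∀ g : G, μ {g} * ν n (φ g ⁻¹' A)
        = c n * ∑ k ∈ Finset.range (n+1), μ {g} * ρs k (φ g ⁻¹' A) := by
      intro g
      rw [hνapp, ← Finset.mul_sum]
      ring
    rw [tsum_congr step1, ENNReal.tsum_mul_left]
    congr 1
    rw [Summable.tsum_finsetSum fun k _ => ENNReal.summable]
    exact Finset.sum_congr rfl fun k _ => (hρsucc k A hA).symm
  have hbound : ∀ n, ∀ A : Set X, MeasurableSet A →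
      (∑' g : G, μ {g} * ν n (φ g ⁻¹' A)) ≤ ν n A + c n ∧
      ν n A ≤ (∑' g : G, μ {g} * ν n (φ g ⁻¹' A)) + c n := by
    intro n A hA
    rw [hkey n A hA, hνapp n A]
    set S1 := ∑ k ∈ Finset.range (n+1), ρs k A with hS1
    set S2 := ∑ k ∈ Finset.range (n+1), ρs (k+1) A with hS2
    have hsum : S1 + ρs (n+1) A = ρs 0 A + S2 := by
      rw [hS1, hS2, ← Finset.sum_range_succ (fun k => ρs k A) (n+1),
        Finset.sum_range_succ' (fun k => ρs k A) (n+1)]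
      ring
    have hS2le : S2 ≤ S1 + 1 := by
      calc S2 ≤ ρs 0 A + S2 := le_add_self
      _ = S1 + ρs (n+1) A := hsum.symm
      _ ≤ S1 + 1 := add_le_add_right (hρle1 _ _) _
    have hS1le : S1 ≤ S2 + 1 := by
      calc S1 ≤ S1 + ρs (n+1) A := le_self_add
      _ = ρs 0 A + S2 := hsum
      _ ≤ 1 + S2 := add_le_add_left (hρle1 _ _) _
      _ = S2 + 1 := add_comm _ _
    constructor
    · calc c n * S2 ≤ c n * (S1 + 1) := mul_le_mul_right hS2le _
      _ = c n * S1 + c n := by rw [mul_add, mul_one]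
    · calc c n * S1 ≤ c n * (S2 + 1) := mul_le_mul_right hS1le _
      _ = c n * S2 + c n := by rw [mul_add, mul_one]
  -- ultrafilter limit of the Cesàro averages
  set 𝒰 : Ultrafilter ℕ := Ultrafilter.of atTop with h𝒰def
  have h𝒰le : (𝒰 : Filter ℕ) ≤ atTop := Ultrafilter.of_le _
  have hUlim : ∀ f : ℕ → ℝ≥0∞, Tendsto f 𝒰 (𝓝 (𝒰.map f).lim) := fun f => (𝒰.map f).le_nhds_lim
  set m : Set X → ℝ≥0∞ := fun A => (𝒰.map (fun n => ν n A)).lim with hmdef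
  have hmt : ∀ A : Set X, Tendsto (fun n => ν n A) 𝒰 (𝓝 (m A)) := fun A => hUlim _
  have hmle1 : ∀ A : Set X, m A ≤ 1 := fun A =>
    le_of_tendsto (hmt A) (Eventually.of_forall fun n => hνle1 n A)
  have hmmono : ∀ {A B : Set X}, A ⊆ B → m A ≤ m B := fun {A B} h =>
    le_of_tendsto_of_tendsto' (hmt A) (hmt B) fun n => measure_mono h
  have hmunion : ∀ A B : Set X, m (A ∪ B) ≤ m A + m B := fun A B =>
    le_of_tendsto_of_tendsto' (hmt (A ∪ B)) ((hmt A).add (hmt B)) fun n => measure_union_le A B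
  have hmadd : ∀ U V : Set X, IsOpen U → IsOpen V → Disjoint U V → m (U ∪ V) = m U + m V := by
    intro U V hU hV hUV
    refine tendsto_nhds_unique (hmt (U ∪ V)) (Tendsto.congr (fun n => ?_) ((hmt U).add (hmt V)))
    exact (measure_union hUV hV.measurableSet).symm
  have hmuniv : m Set.univ = 1 := by
    have huniv : (fun n => ν n Set.univ) = fun _ => (1 : ℝ≥0∞) :=
      funext fun n => (hνprob n).measure_univ
    exact tendsto_nhds_unique (huniv ▸ hmt Set.univ) tendsto_const_nhds
  have hmcompl : ∀ A : Set X, MeasurableSet A → m A + m Aᶜ = 1 := by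
    intro A hA
    refine (tendsto_nhds_unique (Tendsto.congr (fun n => ?_) ((hmt A).add (hmt Aᶜ)))
      tendsto_const_nhds)
    rw [measure_add_measure_compl hA, (hνprob n).measure_univ]
  -- stationarity of m
  have hctend : Tendsto c (𝒰 : Filter ℕ) (𝓝 0) :=
    ((tendsto_add_atTop_iff_nat 1).2 ENNReal.tendsto_inv_nat_nhds_zero).mono_left h𝒰le
  have hmstat : ∀ A : Set X, MeasurableSet A →
      m A = ∑' g : G, μ {g} * m (φ g ⁻¹' A) := by
    intro A hA
    set b : ℕ → ℝ≥0∞ := fun n => ∑' g : G, μ {g} * ν n (φ g ⁻¹' A) with hbdef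
    set L : ℝ≥0∞ := (𝒰.map b).lim with hLdef
    have hbt : Tendsto b (𝒰 : Filter ℕ) (𝓝 L) := hUlim b
    have hLm : L = m A := by
      refine le_antisymm ?_ ?_
      · refine le_of_tendsto_of_tendsto' hbt ?_ fun n => (hbound n A hA).1
        simpa using (hmt A).add hctend
      · refine le_of_tendsto_of_tendsto' (hmt A) ?_ fun n => (hbound n A hA).2
        simpa using hbt.add hctend
    have hsleL : (∑' g : G, μ {g} * m (φ g ⁻¹' A)) ≤ L := by
      rw [ENNReal.tsum_eq_iSup_sum]
      refine iSup_le fun F => ?_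
      have ht : Tendsto (fun n => ∑ g ∈ F, μ {g} * ν n (φ g ⁻¹' A)) (𝒰 : Filter ℕ)
          (𝓝 (∑ g ∈ F, μ {g} * m (φ g ⁻¹' A))) :=
        tendsto_finset_sum F fun g _ => ENNReal.Tendsto.const_mul (hmt _) (Or.inr (measure_ne_top μ _))
      exact le_of_tendsto_of_tendsto' ht hbt fun n =>
        Summable.sum_le_tsum F (fun _ _ => zero_le) ENNReal.summable
    have hLles : L ≤ ∑' g : G, μ {g} * m (φ g ⁻¹' A) := by
      refine ENNReal.le_of_forall_pos_le_add fun ε hε _ => ?_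
      have htail := ENNReal.tendsto_tsum_compl_atTop_zero (f := fun g : G => μ {g})
        (by rw [hμtot]; exact one_ne_top)
      have hev : ∀ᶠ F : Finset G in atTop,
          (∑' g : ((↑F : Set G)ᶜ : Set G), μ {(g : G)}) < (ε : ℝ≥0∞) :=
        htail.eventually (gt_mem_nhds (by exact_mod_cast hε))
      obtain ⟨F, hF⟩ := hev.exists
      have hpt : ∀ n, b n ≤ (∑ g ∈ F, μ {g} * ν n (φ g ⁻¹' A)) + (ε : ℝ≥0∞) := by
        intro n
        have hsplit : b n = (∑ g ∈ F, μ {g} * ν n (φ g ⁻¹' A))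
            + ∑' g : ((↑F : Set G)ᶜ : Set G), μ {(g : G)} * ν n (φ (g : G) ⁻¹' A) := by
          rw [hbdef, ← Finset.tsum_subtype]
          exact (Summable.tsum_add_tsum_compl ENNReal.summable ENNReal.summable).symm
        rw [hsplit]
        refine add_le_add_right ((le_trans ?_ hF.le)) _
        refine Summable.tsum_le_tsum (fun g => ?_) ENNReal.summable ENNReal.summable
        calc μ {(g : G)} * ν n (φ (g : G) ⁻¹' A) ≤ μ {(g : G)} * 1 :=
          mul_le_mul_right (hνle1 n _) _
        _ = μ {(g : G)} := mul_one _
      have ht : Tendsto (fun n => (∑ g ∈ F, μ {g} * ν n (φ g ⁻¹' A)) + (ε : ℝ≥0∞))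
          (𝒰 : Filter ℕ) (𝓝 ((∑ g ∈ F, μ {g} * m (φ g ⁻¹' A)) + (ε : ℝ≥0∞))) :=
        Tendsto.add (tendsto_finset_sum F fun g _ =>
          ENNReal.Tendsto.const_mul (hmt _) (Or.inr (measure_ne_top μ _))) tendsto_const_nhds
      refine (le_of_tendsto_of_tendsto' hbt ht hpt).trans ?_
      exact add_le_add_left (Summable.sum_le_tsum F (fun _ _ => zero_le) ENNReal.summable) _
    rw [← hLm]
    exact le_antisymm hLles hsleL
  -- the regularized content
  set lam : Set X → ℝ≥0∞ := fun K => ⨅ (U : Set X) (_ : IsOpen U) (_ : K ⊆ U), m U with hlamdef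
  have hlam_le : ∀ (K U : Set X), IsOpen U → K ⊆ U → lam K ≤ m U := by
    intro K U hU hKU
    exact iInf_le_of_le U (iInf_le_of_le hU (iInf_le _ hKU))
  have hlam_le1 : ∀ K : Set X, lam K ≤ 1 :=
    fun K => (hlam_le K Set.univ isOpen_univ (Set.subset_univ K)).trans hmuniv.le
  have hlam_ne_top : ∀ K : Set X, lam K ≠ ⊤ := fun K => ((hlam_le1 K).trans_lt one_lt_top).ne
  have hlam_mono : ∀ {K1 K2 : Set X}, K1 ⊆ K2 → lam K1 ≤ lam K2 := by
    intro K1 K2 h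
    refine le_iInf fun U => le_iInf fun hU => le_iInf fun hKU => hlam_le _ _ hU (h.trans hKU)
  have hlam_exists : ∀ (K : Set X) (ε : ℝ≥0∞), ε ≠ 0 →
      ∃ U : Set X, IsOpen U ∧ K ⊆ U ∧ m U < lam K + ε := by
    intro K ε hε
    have : lam K < lam K + ε := ENNReal.lt_add_right (hlam_ne_top K) hε
    conv_lhs at this => rw [hlamdef]
    simp only [iInf_lt_iff] at this
    obtain ⟨U, hU, hKU, hlt⟩ := this
    exact ⟨U, hU, hKU, hlt⟩
  have hlam_sup_le : ∀ K1 K2 : Set X, lam (K1 ∪ K2) ≤ lam K1 + lam K2 := by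
    intro K1 K2
    refine ENNReal.le_of_forall_pos_le_add fun ε hε _ => ?_
    have hε2 : ((ε : ℝ≥0∞) / 2) ≠ 0 := by simp [ENNReal.div_eq_zero_iff, hε.ne']
    obtain ⟨U1, hU1, hK1, hm1⟩ := hlam_exists K1 _ hε2
    obtain ⟨U2, hU2, hK2, hm2⟩ := hlam_exists K2 _ hε2
    calc lam (K1 ∪ K2) ≤ m (U1 ∪ U2) := hlam_le _ _ (hU1.union hU2) (Set.union_subset_union hK1 hK2)
    _ ≤ m U1 + m U2 := hmunion U1 U2
    _ ≤ (lam K1 + (ε : ℝ≥0∞) / 2) + (lam K2 + (ε : ℝ≥0∞) / 2) := add_le_add hm1.le hm2.le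
    _ = lam K1 + lam K2 + ((ε : ℝ≥0∞) / 2 + (ε : ℝ≥0∞) / 2) := by ring
    _ = lam K1 + lam K2 + (ε : ℝ≥0∞) := by rw [ENNReal.add_halves]
  have hlam_add : ∀ K1 K2 : Set X, IsCompact K1 → IsCompact K2 → Disjoint K1 K2 →
      lam (K1 ∪ K2) = lam K1 + lam K2 := by
    intro K1 K2 hK1c hK2c hd
    refine le_antisymm (hlam_sup_le K1 K2) ?_
    obtain ⟨U, V, hUo, hVo, hK1U, hK2V, hUV⟩ := SeparatedNhds.of_isCompact_isCompact hK1c hK2c hd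
    refine le_iInf fun W => le_iInf fun hWo => le_iInf fun hKW => ?_
    have h1 : lam K1 ≤ m (W ∩ U) :=
      hlam_le _ _ (hWo.inter hUo) (Set.subset_inter ((Set.subset_union_left).trans hKW) hK1U)
    have h2 : lam K2 ≤ m (W ∩ V) :=
      hlam_le _ _ (hWo.inter hVo) (Set.subset_inter ((Set.subset_union_right).trans hKW) hK2V)
    calc lam K1 + lam K2 ≤ m (W ∩ U) + m (W ∩ V) := add_le_add h1 h2
    _ = m ((W ∩ U) ∪ (W ∩ V)) := (hmadd _ _ (hWo.inter hUo) (hWo.inter hVo)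
        (hUV.mono Set.inter_subset_right Set.inter_subset_right)).symm
    _ ≤ m W := hmmono (Set.union_subset Set.inter_subset_left Set.inter_subset_left)
  -- build the content
  set C : Content X :=
    { toFun := fun K => (lam K).toNNReal
      mono' := fun K1 K2 h =>
        ENNReal.toNNReal_mono (hlam_ne_top _) (hlam_mono h)
      sup_disjoint' := by
        intro K1 K2 hd _ _
        show (lam (↑K1 ∪ ↑K2)).toNNReal = (lam ↑K1).toNNReal + (lam ↑K2).toNNReal
        rw [hlam_add _ _ K1.isCompact K2.isCompact hd,
          ENNReal.toNNReal_add (hlam_ne_top _) (hlam_ne_top _)]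
      sup_le' := by
        intro K1 K2
        show (lam (↑K1 ∪ ↑K2)).toNNReal ≤ (lam ↑K1).toNNReal + (lam ↑K2).toNNReal
        rw [← ENNReal.toNNReal_add (hlam_ne_top _) (hlam_ne_top _)]
        exact ENNReal.toNNReal_mono (by simp [hlam_ne_top]) (hlam_sup_le _ _) } with hCdef
  have hCcoe : ∀ K : Compacts X, (C K : ℝ≥0∞) = lam (K : Set X) := by
    intro K
    show ((lam (K : Set X)).toNNReal : ℝ≥0∞) = lam (K : Set X)
    exact ENNReal.coe_toNNReal (hlam_ne_top _)
  set νf : Measure X := C.measure with hνfdef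
  have hνf_open : ∀ U : Set X, IsOpen U → νf U = ⨆ (K : Compacts X) (_ : (K : Set X) ⊆ U), lam K := by
    intro U hU
    rw [hνfdef, C.measure_apply hU.measurableSet, C.outerMeasure_of_isOpen U hU]
    unfold MeasureTheory.Content.innerContent
    exact iSup_congr fun K => iSup_congr fun _ => hCcoe K
  have hνf_open_le : ∀ U : Set X, IsOpen U → νf U ≤ m U := by
    intro U hU
    rw [hνf_open U hU]
    exact iSup_le fun K => iSup_le fun hK => hlam_le _ _ hU hK
  have hνf_univ : νf Set.univ = 1 := by
    refine le_antisymm ((hνf_open_le _ isOpen_univ).trans hmuniv.le) ?_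
    have hlamuniv : (1 : ℝ≥0∞) ≤ lam Set.univ := by
      refine le_iInf fun U => le_iInf fun hU => le_iInf fun hsub => ?_
      rw [Set.univ_subset_iff.1 hsub, hmuniv]
    rw [hνf_open _ isOpen_univ]
    refine hlamuniv.trans ?_
    exact le_iSup_of_le ⟨Set.univ, isCompact_univ⟩ (le_iSup_of_le (Set.subset_univ _) le_rfl)
  haveI hνfprob : IsProbabilityMeasure νf := ⟨hνf_univ⟩
  have hclosed_ge : ∀ F : Set X, IsClosed F → m F ≤ νf F := by
    intro F hF
    have h1 : m F + m Fᶜ = 1 := hmcompl F hF.measurableSet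
    have h2 : νf F + νf Fᶜ = 1 := by
      rw [measure_add_measure_compl hF.measurableSet, measure_univ]
    have h3 : νf Fᶜ ≤ m Fᶜ := hνf_open_le _ hF.isOpen_compl
    have hb : m Fᶜ ≠ ⊤ := ((hmle1 _).trans_lt one_lt_top).ne
    rw [← ENNReal.add_le_add_iff_right hb]
    calc m F + m Fᶜ = 1 := h1
    _ = νf F + νf Fᶜ := h2.symm
    _ ≤ νf F + m Fᶜ := add_le_add_right h3 _
  -- the stationarity inequality on open sets
  set σ : Measure X := T νf with hσdef
  haveI hσprob : IsProbabilityMeasure σ := hTprob _ hνfprob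
  have hstep : ∀ U : Set X, IsOpen U → νf U ≤ σ U := by
    intro U hU
    rw [hνf_open U hU]
    refine iSup_le fun K => iSup_le fun hKU => ?_
    obtain ⟨V, hVo, hKV, hclV⟩ := normal_exists_closure_subset K.isCompact.isClosed hU hKU
    have hstep2 : ∀ g : G, m (φ g ⁻¹' V) ≤ νf (φ g ⁻¹' U) := by
      intro g
      calc m (φ g ⁻¹' V) ≤ m (φ g ⁻¹' closure V) := hmmono (Set.preimage_mono subset_closure)
      _ ≤ νf (φ g ⁻¹' closure V) := hclosed_ge _ (isClosed_closure.preimage (hcont g))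
      _ ≤ νf (φ g ⁻¹' U) := measure_mono (Set.preimage_mono hclV)
    calc lam (K : Set X) ≤ m V := hlam_le _ _ hVo hKV
    _ = ∑' g : G, μ {g} * m (φ g ⁻¹' V) := hmstat V hVo.measurableSet
    _ ≤ ∑' g : G, μ {g} * νf (φ g ⁻¹' U) :=
      Summable.tsum_le_tsum (fun g => mul_le_mul_right (hstep2 g) _) ENNReal.summable ENNReal.summable
    _ = σ U := (hTapp νf U hU.measurableSet).symm
  -- outer regularity upgrades the inequality to all measurable sets
  have hle : ∀ A : Set X, MeasurableSet A → νf A ≤ σ A := by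
    intro A hA
    rw [Set.measure_eq_iInf_isOpen A σ]
    refine le_iInf fun U => le_iInf fun hAU => le_iInf fun hUo => ?_
    exact (measure_mono hAU).trans (hstep U hUo)
  -- conclude equality from the complement trick
  refine ⟨νf, hνfprob, fun A hA => ?_⟩
  have h1 := hle A hA
  have h2 := hle Aᶜ hA.compl
  have e1 : νf A + νf Aᶜ = 1 := by rw [measure_add_measure_compl hA, measure_univ]
  have e2 : σ A + σ Aᶜ = 1 := by rw [measure_add_measure_compl hA, measure_univ]
  have hb : νf Aᶜ ≠ ⊤ := (measure_ne_top _ _)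
  have hgoal : σ A ≤ νf A := by
    rw [← ENNReal.add_le_add_iff_right hb]
    calc σ A + νf Aᶜ ≤ σ A + σ Aᶜ := add_le_add_right h2 _
    _ = 1 := e2
    _ = νf A + νf Aᶜ := e1.symm
  have : νf A = σ A := le_antisymm h1 hgoal
  rw [this, hσdef, hTapp νf A hA]
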